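/- Suppose every n-player m-action game with payoffs in [0,1] admits an (ε/2)-Nash equilibrium in which each player's mixed strategy has support of size at most b. Then every such game admits a k-uniform ε-correlated equilibrium whenever exp(−kε²/8)·n·m^b < 1. -/

import Mathlib

open Finset
set_option maxHeartbeats 1000000


private lemma sinh_le_mul_cosh {t : ℝ} (ht : 0 ≤ t) : Real.sinh t ≤ t * Real.cosh t := by
  have hd : ∀ x : ℝ, HasDerivAt (fun s => s * Real.cosh s - Real.sinh s) (x * Real.sinh x) x := by
    intro x
    have h1 : HasDerivAt (fun s => s * Real.cosh s - Real.sinh s)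
        (1 * Real.cosh x + id x * Real.sinh x - Real.cosh x) x := ((hasDerivAt_id x).mul (Real.hasDerivAt_cosh x)).sub (Real.hasDerivAt_sinh x)
    convert h1 using 1
    simp [id_eq]
  have hmono : MonotoneOn (fun s => s * Real.cosh s - Real.sinh s) (Set.Ici (0:ℝ)) := by
    apply monotoneOn_of_deriv_nonneg (convex_Ici 0)
    · exact Continuous.continuousOn (by continuity)
    · exact fun x _ => (hd x).differentiableAt.differentiableWithinAt
    · intro x hx
      rw [interior_Ici] at hx
      rw [(hd x).deriv]
      exact mul_nonneg (le_of_lt hx) (Real.sinh_nonneg_iff.mpr (le_of_lt hx))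
  have h0 := hmono Set.self_mem_Ici (Set.mem_Ici.mpr ht) ht
  simp only [Real.sinh_zero, Real.cosh_zero, zero_mul, sub_zero, mul_one] at h0
  linarith

private lemma cosh_add_mul_sinh_le {t : ℝ} (ht : 0 ≤ t) :
    Real.cosh t + t * Real.sinh t ≤ Real.exp (3 / 2 * t ^ 2) := by
  have h1 : Real.cosh t + t * Real.sinh t ≤ (1 + t ^ 2) * Real.cosh t := by
    have h := sinh_le_mul_cosh ht
    nlinarith [Real.cosh_pos t]
  have h2 : (1 + t ^ 2 : ℝ) ≤ Real.exp (t ^ 2) := by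
    have := Real.add_one_le_exp (t ^ 2); linarith
  have h3 := Real.cosh_le_exp_half_sq t
  calc Real.cosh t + t * Real.sinh t ≤ (1 + t ^ 2) * Real.cosh t := h1
    _ ≤ Real.exp (t ^ 2) * Real.exp (t ^ 2 / 2) := by
        apply mul_le_mul h2 h3 (Real.cosh_pos t).le (Real.exp_nonneg _)
    _ = Real.exp (3 / 2 * t ^ 2) := by rw [← Real.exp_add]; ring_nf

private lemma exp_le_cosh_add {t X : ℝ} (h1 : -1 ≤ X) (h2 : X ≤ 1) :
    Real.exp (t * X) ≤ Real.cosh t + X * Real.sinh t := by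
  have hc := convexOn_exp.2 (Set.mem_univ t) (Set.mem_univ (-t))
      (show (0:ℝ) ≤ (1 + X) / 2 by linarith) (show (0:ℝ) ≤ (1 - X) / 2 by linarith)
      (show (1 + X) / 2 + (1 - X) / 2 = 1 by ring)
  simp only [smul_eq_mul] at hc
  have e1 : (1 + X) / 2 * t + (1 - X) / 2 * (-t) = t * X := by ring
  rw [e1] at hc
  rw [Real.cosh_eq, Real.sinh_eq]
  calc Real.exp (t * X) ≤ (1 + X) / 2 * Real.exp t + (1 - X) / 2 * Real.exp (-t) := hc
    _ = _ := by ring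

private lemma sum_prod_pow {A : Type*} [Fintype A] (k : ℕ) (g : A → ℝ) :
    ∑ D : Fin k → A, ∏ l, g (D l) = (∑ a, g a) ^ k := by
  classical
  have h := Finset.prod_univ_sum (fun _ : Fin k => (Finset.univ : Finset A)) (fun _ a => g a)
  simp only [Fintype.piFinset_univ] at h
  rw [← h, Finset.prod_const, Finset.card_univ, Fintype.card_fin]


private lemma chernoff {A : Type*} [Fintype A] (k : ℕ) (ε : ℝ) (hε : 0 < ε)
    (P : A → ℝ) (hP : ∀ a, 0 ≤ P a) (hP1 : ∑ a, P a = 1)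
    (X : A → ℝ) (hX1 : ∀ a, -1 ≤ X a) (hX2 : ∀ a, X a ≤ 1)
    (hμ : ∑ a, X a * P a ≤ ε / 2)
    (S : Finset (Fin k → A)) (hS : ∀ D ∈ S, (k : ℝ) * ε < ∑ l, X (D l)) :
    ∑ D ∈ S, ∏ l, P (D l) ≤ Real.exp (-(k : ℝ) * ε ^ 2 / 8) := by
  classical
  set t : ℝ := ε / 2 with htdef
  have ht : 0 < t := by positivity
  have hsum_nonneg : (0:ℝ) ≤ ∑ a, P a * Real.exp (t * X a) :=
    Finset.sum_nonneg fun a _ => mul_nonneg (hP a) (Real.exp_nonneg _)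
  have hmgf : ∑ a, P a * Real.exp (t * X a) ≤ Real.exp (3 / 2 * t ^ 2) := by
    have step1 : ∑ a, P a * Real.exp (t * X a)
        ≤ ∑ a, (P a * Real.cosh t + X a * P a * Real.sinh t) := by
      refine Finset.sum_le_sum fun a _ => ?_
      calc P a * Real.exp (t * X a)
          ≤ P a * (Real.cosh t + X a * Real.sinh t) :=
            mul_le_mul_of_nonneg_left (exp_le_cosh_add (hX1 a) (hX2 a)) (hP a)
        _ = P a * Real.cosh t + X a * P a * Real.sinh t := by ring
    have step2 : ∑ a, (P a * Real.cosh t + X a * P a * Real.sinh t)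
        = Real.cosh t + (∑ a, X a * P a) * Real.sinh t := by
      rw [Finset.sum_add_distrib, ← Finset.sum_mul, ← Finset.sum_mul, hP1, one_mul]
    have hsh : (0:ℝ) ≤ Real.sinh t := Real.sinh_nonneg_iff.mpr ht.le
    have step3 : (∑ a, X a * P a) * Real.sinh t ≤ t * Real.sinh t :=
      mul_le_mul_of_nonneg_right hμ hsh
    have := cosh_add_mul_sinh_le ht.le
    linarith [step2 ▸ step1]
  have key : ∀ D ∈ S, ∏ l, P (D l)
      ≤ Real.exp (-(t * ((k:ℝ) * ε))) * ∏ l, (P (D l) * Real.exp (t * X (D l))) := by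
    intro D hD
    have h1 : (1:ℝ) ≤ Real.exp (t * (∑ l, X (D l) - (k:ℝ) * ε)) := by
      rw [← Real.exp_zero]
      apply Real.exp_le_exp.mpr
      have := hS D hD
      nlinarith
    calc ∏ l, P (D l) = (∏ l, P (D l)) * 1 := (mul_one _).symm
      _ ≤ (∏ l, P (D l)) * Real.exp (t * (∑ l, X (D l) - (k:ℝ) * ε)) :=
          mul_le_mul_of_nonneg_left h1 (Finset.prod_nonneg fun l _ => hP _)
      _ = Real.exp (-(t * ((k:ℝ) * ε))) * ∏ l, (P (D l) * Real.exp (t * X (D l))) := by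
          rw [mul_sub, Finset.mul_sum, sub_eq_add_neg, Real.exp_add, Real.exp_sum,
            Finset.prod_mul_distrib]
          ring
  calc ∑ D ∈ S, ∏ l, P (D l)
      ≤ ∑ D ∈ S, Real.exp (-(t * ((k:ℝ) * ε))) * ∏ l, (P (D l) * Real.exp (t * X (D l))) :=
        Finset.sum_le_sum key
    _ ≤ ∑ D : Fin k → A, Real.exp (-(t * ((k:ℝ) * ε)))
          * ∏ l, (P (D l) * Real.exp (t * X (D l))) := by
        refine Finset.sum_le_sum_of_subset_of_nonneg (Finset.subset_univ S) fun D _ _ => ?_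
        exact mul_nonneg (Real.exp_nonneg _)
          (Finset.prod_nonneg fun l _ => mul_nonneg (hP _) (Real.exp_nonneg _))
    _ = Real.exp (-(t * ((k:ℝ) * ε))) * (∑ a, P a * Real.exp (t * X a)) ^ k := by
        rw [← Finset.mul_sum, sum_prod_pow k (fun a => P a * Real.exp (t * X a))]
    _ ≤ Real.exp (-(t * ((k:ℝ) * ε))) * (Real.exp (3 / 2 * t ^ 2)) ^ k :=
        mul_le_mul_of_nonneg_left (pow_le_pow_left₀ hsum_nonneg hmgf k) (Real.exp_nonneg _)
    _ = Real.exp (-(k : ℝ) * ε ^ 2 / 8) := by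
        rw [← Real.exp_nat_mul, ← Real.exp_add]
        congr 1
        rw [htdef]
        ring


private lemma marg {n m : ℕ} (σ : Fin n → Fin m → ℝ) (i : Fin n)
    (hsum : ∑ j, σ i j = 1) (F : (Fin n → Fin m) → ℝ) :
    ∑ a, F a * ∏ l, σ l (a l)
      = ∑ j, σ i j * ∑ a, F (Function.update a i j) * ∏ l, σ l (a l) := by
  classical
  have key : ∀ (a : Fin n → Fin m) (j : Fin m),
      σ i j * (F (Function.update a i j) * ∏ l, σ l (a l))
        = σ i (a i) * (F (Function.update a i j) * ∏ l, σ l (Function.update a i j l)) := by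
    intro a j
    have h1 : ∏ l, σ l (a l) = σ i (a i) * ∏ l ∈ Finset.univ.erase i, σ l (a l) :=
      (Finset.mul_prod_erase Finset.univ (fun l => σ l (a l)) (Finset.mem_univ i)).symm
    have h2 : ∏ l, σ l (Function.update a i j l)
        = σ i j * ∏ l ∈ Finset.univ.erase i, σ l (a l) := by
      rw [← Finset.mul_prod_erase Finset.univ (fun l => σ l (Function.update a i j l))
        (Finset.mem_univ i)]
      simp only [Function.update_self]
      congr 1
      refine Finset.prod_congr rfl (fun l hl => ?_)
      rw [Function.update_of_ne (Finset.ne_of_mem_erase hl)]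
    rw [h1, h2]; ring
  let e : (Fin m × (Fin n → Fin m)) ≃ (Fin m × (Fin n → Fin m)) :=
    { toFun := fun p => (p.2 i, Function.update p.2 i p.1)
      invFun := fun p => (p.2 i, Function.update p.2 i p.1)
      left_inv := fun p => by
        simp [Function.update_idem, Function.update_self, Function.update_eq_self]
      right_inv := fun p => by
        simp [Function.update_idem, Function.update_self, Function.update_eq_self] }
  symm
  calc ∑ j, σ i j * ∑ a, F (Function.update a i j) * ∏ l, σ l (a l)
      = ∑ p : Fin m × (Fin n → Fin m),
          σ i p.1 * (F (Function.update p.2 i p.1) * ∏ l, σ l (p.2 l)) := by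
        rw [Fintype.sum_prod_type]
        exact Finset.sum_congr rfl fun j _ => Finset.mul_sum _ _ _
    _ = ∑ p : Fin m × (Fin n → Fin m),
          σ i (p.2 i) * (F (Function.update p.2 i p.1)
            * ∏ l, σ l (Function.update p.2 i p.1 l)) :=
        Finset.sum_congr rfl fun p _ => key p.2 p.1
    _ = ∑ p : Fin m × (Fin n → Fin m), σ i p.1 * (F p.2 * ∏ l, σ l (p.2 l)) :=
        Fintype.sum_equiv e _ (fun q => σ i q.1 * (F q.2 * ∏ l, σ l (q.2 l)))
          (fun p => rfl)
    _ = ∑ a, F a * ∏ l, σ l (a l) := by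
        rw [Fintype.sum_prod_type]
        simp_rw [← Finset.mul_sum]
        rw [← Finset.sum_mul, hsum, one_mul]


private lemma card_restricted_le {m b : ℕ} (hm : 0 < m) (B : Finset (Fin m)) (hB : B.card ≤ b) :
    (Finset.univ.filter (fun f : Fin m → Fin m => ∀ j ∉ B, f j = j)).card ≤ m ^ b := by
  classical
  have h1 : (Finset.univ.filter (fun f : Fin m → Fin m => ∀ j ∉ B, f j = j)).card
      ≤ Fintype.card (↥B → Fin m) := by
    rw [← Finset.card_univ]
    apply Finset.card_le_card_of_injOn (fun f (j : ↥B) => f j)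
      (fun _ _ => Finset.mem_univ _)
    intro f hf g hg hfg
    simp only [Finset.coe_filter, Set.mem_setOf_eq, Finset.mem_univ, true_and] at hf hg
    funext j
    by_cases hj : j ∈ B
    · exact congrFun hfg ⟨j, hj⟩
    · rw [hf j hj, hg j hj]
  calc _ ≤ Fintype.card (↥B → Fin m) := h1
    _ = m ^ B.card := by rw [Fintype.card_fun, Fintype.card_fin, Fintype.card_coe]
    _ ≤ m ^ b := Nat.pow_le_pow_right hm hB


private lemma union_bound {Ω α β : Type*} [Fintype Ω] [Fintype α] [Fintype β]
    (W : Ω → ℝ) (hW : ∀ D, 0 ≤ W D) (R : α → Finset β) (p : α → β → Ω → Prop)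
    [∀ i f, DecidablePred (p i f)]
    [DecidablePred (fun D => ∃ i, ∃ f ∈ R i, p i f D)]
    (E : ℝ) (hE : 0 ≤ E)
    (hp : ∀ i f, ∑ D ∈ Finset.univ.filter (p i f), W D ≤ E)
    (M : ℕ) (hM : ∀ i, (R i).card ≤ M) :
    ∑ D ∈ Finset.univ.filter (fun D => ∃ i, ∃ f ∈ R i, p i f D), W D
      ≤ (Fintype.card α : ℝ) * M * E := by
  have hite : ∀ (D : Ω) (i : α) (f : β), 0 ≤ if p i f D then W D else 0 := by
    intro D i f; split_ifs <;> simp [hW D]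
  calc ∑ D ∈ Finset.univ.filter (fun D => ∃ i, ∃ f ∈ R i, p i f D), W D
      ≤ ∑ D ∈ Finset.univ.filter (fun D => ∃ i, ∃ f ∈ R i, p i f D),
          ∑ i, ∑ f ∈ R i, (if p i f D then W D else 0) := by
        refine Finset.sum_le_sum fun D hD => ?_
        obtain ⟨i0, f0, hf0, hp0⟩ := (Finset.mem_filter.mp hD).2
        have h1 : W D ≤ ∑ f ∈ R i0, (if p i0 f D then W D else 0) := by
          refine le_trans ?_ (Finset.single_le_sum (fun f _ => hite D i0 f) hf0)
          rw [if_pos hp0]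
        exact h1.trans (Finset.single_le_sum
          (fun i _ => Finset.sum_nonneg fun f _ => hite D i f) (Finset.mem_univ i0))
    _ ≤ ∑ D : Ω, ∑ i, ∑ f ∈ R i, (if p i f D then W D else 0) := by
        refine Finset.sum_le_sum_of_subset_of_nonneg (Finset.filter_subset _ _)
          fun D _ _ => Finset.sum_nonneg fun i _ => Finset.sum_nonneg fun f _ => hite D i f
    _ = ∑ i, ∑ f ∈ R i, ∑ D : Ω, (if p i f D then W D else 0) := by
        rw [Finset.sum_comm]
        exact Finset.sum_congr rfl fun i _ => Finset.sum_comm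
    _ = ∑ i, ∑ f ∈ R i, ∑ D ∈ Finset.univ.filter (p i f), W D := by
        simp_rw [Finset.sum_filter]
    _ ≤ ∑ i, ∑ f ∈ R i, E :=
        Finset.sum_le_sum fun i _ => Finset.sum_le_sum fun f _ => hp i f
    _ = ∑ i : α, ((R i).card : ℝ) * E := by
        simp [Finset.sum_const, nsmul_eq_mul]
    _ ≤ ∑ i : α, (M : ℝ) * E :=
        Finset.sum_le_sum fun i _ =>
          mul_le_mul_of_nonneg_right (Nat.cast_le.mpr (hM i)) hE
    _ = (Fintype.card α : ℝ) * M * E := by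
        rw [Finset.sum_const, nsmul_eq_mul, Finset.card_univ]; ring
private lemma exists_good {Ω α β : Type*} [Fintype Ω] [Fintype α] [Fintype β]
    (W : Ω → ℝ) (hW : ∀ D, 0 ≤ W D) (htot : ∑ D, W D = 1)
    (R : α → Finset β) (p : α → β → Ω → Prop)
    [∀ i f, DecidablePred (p i f)]
    (E : ℝ) (hE : 0 ≤ E)
    (hp : ∀ i f, ∑ D ∈ Finset.univ.filter (p i f), W D ≤ E)
    (M : ℕ) (hM : ∀ i, (R i).card ≤ M)
    (hlt : (Fintype.card α : ℝ) * M * E < 1) :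
    ∃ D : Ω, 0 < W D ∧ ∀ i, ∀ f ∈ R i, ¬ p i f D := by
  classical
  have hub := union_bound W hW R p E hE hp M hM
  have h1 : ∑ D ∈ Finset.univ.filter (fun D => ∃ i, ∃ f ∈ R i, p i f D), W D < 1 :=
    lt_of_le_of_lt hub hlt
  have hsd := Finset.sum_sdiff (f := W)
    (Finset.filter_subset (fun D => ∃ i, ∃ f ∈ R i, p i f D) Finset.univ)
  rw [htot] at hsd
  have hpos : 0 < ∑ D ∈ Finset.univ \ Finset.univ.filter
      (fun D => ∃ i, ∃ f ∈ R i, p i f D), W D := by linarith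
  obtain ⟨D, hDmem, hDpos⟩ : ∃ D ∈ Finset.univ \ Finset.univ.filter
      (fun D => ∃ i, ∃ f ∈ R i, p i f D), 0 < W D := by
    by_contra hcon
    push_neg at hcon
    have := Finset.sum_nonpos hcon
    linarith
  refine ⟨D, hDpos, ?_⟩
  have hDnB := (Finset.mem_sdiff.mp hDmem).2
  simp only [Finset.mem_filter, Finset.mem_univ, true_and, not_exists] at hDnB
  intro i f hf hp0
  exact hDnB i f ⟨hf, hp0⟩

/-- If every n-player m-action game with payoffs in [0,1] admits an
    (ε/2)-Nash equilibrium with per-player supports of size at most `b`, then every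
    such game admits a k-uniform ε-correlated equilibrium whenever
    `exp(-kε²/8)·n·m^b < 1`. -/
theorem small_support_nash_implies_small_support_ce (n m b k : ℕ) (ε : ℝ) (hε : 0 < ε)
    (hk : Real.exp (-(k : ℝ) * ε ^ 2 / 8) * n * (m : ℝ) ^ b < 1)
    (hNash : ∀ u : Fin n → (Fin n → Fin m) → ℝ,
      (∀ i a, u i a ∈ Set.Icc (0 : ℝ) 1) →
      ∃ σ : Fin n → (Fin m → ℝ),
        (∀ i ai, 0 ≤ σ i ai) ∧ (∀ i, ∑ ai, σ i ai = 1) ∧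
        (∀ i : Fin n, (Finset.univ.filter (fun ai => σ i ai ≠ 0)).card ≤ b) ∧
        (∀ i : Fin n, ∀ j : Fin m,
          ∑ a : Fin n → Fin m,
            (u i (Function.update a i j) - u i a) * ∏ l, σ l (a l) ≤ ε / 2)) :
    ∀ u : Fin n → (Fin n → Fin m) → ℝ,
      (∀ i a, u i a ∈ Set.Icc (0 : ℝ) 1) →
      ∃ D : Fin k → (Fin n → Fin m),
        ∀ i : Fin n, ∀ f : Fin m → Fin m,
          (∑ l : Fin k, (u i (Function.update (D l) i (f (D l i))) - u i (D l))) / k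
            ≤ ε := by
  classical
  intro u hu
  rcases Nat.eq_zero_or_pos k with hk0 | hkpos
  · subst hk0
    refine ⟨fun l => Fin.elim0 l, fun i f => ?_⟩
    simp only [Finset.univ_eq_empty, Finset.sum_empty, Nat.cast_zero, div_zero]
    exact hε.le
  rcases Nat.eq_zero_or_pos n with hn0 | hnpos
  · subst hn0
    exact ⟨fun _ j => Fin.elim0 j, fun i => Fin.elim0 i⟩
  rcases Nat.eq_zero_or_pos m with hm0 | hmpos
  · subst hm0
    obtain ⟨σ, -, hσ1, -, -⟩ := hNash u hu
    have h := hσ1 ⟨0, hnpos⟩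
    simp at h
  -- main case
  obtain ⟨σ, hσ0, hσ1, hσb, hσN⟩ := hNash u hu
  have hPn : ∀ a : Fin n → Fin m, 0 ≤ ∏ l, σ l (a l) :=
    fun a => Finset.prod_nonneg fun l _ => hσ0 l (a l)
  have hP1 : ∑ a : Fin n → Fin m, ∏ l, σ l (a l) = 1 := by
    have h := Finset.prod_univ_sum (fun _ : Fin n => (Finset.univ : Finset (Fin m)))
      (fun i j => σ i j)
    simp only [Fintype.piFinset_univ] at h
    rw [← h]
    simp [hσ1]
  have hXlo : ∀ (i : Fin n) (f : Fin m → Fin m) (a : Fin n → Fin m),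
      -1 ≤ u i (Function.update a i (f (a i))) - u i a := by
    intro i f a
    have h1 := hu i (Function.update a i (f (a i)))
    have h2 := hu i a
    simp only [Set.mem_Icc] at h1 h2
    linarith
  have hXhi : ∀ (i : Fin n) (f : Fin m → Fin m) (a : Fin n → Fin m),
      u i (Function.update a i (f (a i))) - u i a ≤ 1 := by
    intro i f a
    have h1 := hu i (Function.update a i (f (a i)))
    have h2 := hu i a
    simp only [Set.mem_Icc] at h1 h2
    linarith
  -- expected regret of any switching rule is at most ε/2
  have hmu : ∀ (i : Fin n) (f : Fin m → Fin m),
      ∑ a : Fin n → Fin m,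
        (u i (Function.update a i (f (a i))) - u i a) * ∏ l, σ l (a l) ≤ ε / 2 := by
    intro i f
    have hF := marg σ i (hσ1 i) (fun a => u i (Function.update a i (f (a i))))
    simp only [Function.update_self, Function.update_idem] at hF
    have hsplit : ∀ g : (Fin n → Fin m) → ℝ,
        ∑ a : Fin n → Fin m, (g a - u i a) * ∏ l, σ l (a l)
          = (∑ a : Fin n → Fin m, g a * ∏ l, σ l (a l))
            - ∑ a : Fin n → Fin m, u i a * ∏ l, σ l (a l) := by
      intro g
      rw [← Finset.sum_sub_distrib]
      exact Finset.sum_congr rfl fun a _ => by ring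
    have hNj : ∀ j : Fin m,
        ∑ a : Fin n → Fin m, u i (Function.update a i j) * ∏ l, σ l (a l)
          ≤ (∑ a : Fin n → Fin m, u i a * ∏ l, σ l (a l)) + ε / 2 := by
      intro j
      have h := hσN i j
      rw [hsplit (fun a => u i (Function.update a i j))] at h
      linarith
    rw [hsplit (fun a => u i (Function.update a i (f (a i)))), hF]
    have hub : ∑ j, σ i j *
          ∑ a : Fin n → Fin m, u i (Function.update a i (f j)) * ∏ l, σ l (a l)
        ≤ ∑ j, σ i j *
            ((∑ a : Fin n → Fin m, u i a * ∏ l, σ l (a l)) + ε / 2) :=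
      Finset.sum_le_sum fun j _ => mul_le_mul_of_nonneg_left (hNj (f j)) (hσ0 i j)
    have heq : ∑ j, σ i j *
          ((∑ a : Fin n → Fin m, u i a * ∏ l, σ l (a l)) + ε / 2)
        = (∑ a : Fin n → Fin m, u i a * ∏ l, σ l (a l)) + ε / 2 := by
      rw [← Finset.sum_mul, hσ1 i, one_mul]
    linarith
  -- Chernoff bound for each (i, f)
  have hchern : ∀ (i : Fin n) (f : Fin m → Fin m),
      ∑ D ∈ Finset.univ.filter (fun D : Fin k → (Fin n → Fin m) =>
          (k : ℝ) * ε < ∑ l, (u i (Function.update (D l) i (f (D l i))) - u i (D l))),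
        ∏ l, ∏ l', σ l' (D l l')
      ≤ Real.exp (-(k : ℝ) * ε ^ 2 / 8) := by
    intro i f
    exact chernoff k ε hε (fun a => ∏ l', σ l' (a l')) hPn hP1
      (fun a => u i (Function.update a i (f (a i))) - u i a)
      (hXlo i f) (hXhi i f) (hmu i f) _
      (fun D hD => (Finset.mem_filter.mp hD).2)
  -- union bound
  have hRcard : ∀ i : Fin n,
      (Finset.univ.filter (fun f : Fin m → Fin m =>
        ∀ j ∉ Finset.univ.filter (fun j => σ i j ≠ 0), f j = j)).card ≤ m ^ b :=
    fun i => card_restricted_le hmpos _ (hσb i)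
  have htotal : ∑ D : Fin k → (Fin n → Fin m), ∏ l, ∏ l', σ l' (D l l') = 1 := by
    rw [sum_prod_pow k (fun a : Fin n → Fin m => ∏ l', σ l' (a l')), hP1, one_pow]
  have hlt : (Fintype.card (Fin n) : ℝ) * ((m ^ b : ℕ) : ℝ)
      * Real.exp (-(k : ℝ) * ε ^ 2 / 8) < 1 := by
    push_cast [Fintype.card_fin]
    calc (n : ℝ) * (m : ℝ) ^ b * Real.exp (-(k : ℝ) * ε ^ 2 / 8)
        = Real.exp (-(k : ℝ) * ε ^ 2 / 8) * n * (m : ℝ) ^ b := by ring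
      _ < 1 := hk
  obtain ⟨D, hDpos, hgood⟩ := exists_good
    (fun D : Fin k → (Fin n → Fin m) => ∏ l, ∏ l', σ l' (D l l'))
    (fun D => Finset.prod_nonneg fun l _ => hPn (D l))
    htotal
    (fun i : Fin n => Finset.univ.filter (fun f : Fin m → Fin m =>
      ∀ j ∉ Finset.univ.filter (fun j => σ i j ≠ 0), f j = j))
    (fun i f D => (k : ℝ) * ε
      < ∑ l, (u i (Function.update (D l) i (f (D l i))) - u i (D l)))
    (Real.exp (-(k : ℝ) * ε ^ 2 / 8)) (Real.exp_nonneg _)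
    (fun i f => hchern i f) (m ^ b) hRcard hlt
  have hσne : ∀ (l : Fin k) (i : Fin n), σ i (D l i) ≠ 0 := by
    intro l i hzero
    apply absurd hDpos
    simp only [not_lt]
    have h1 : ∏ l', σ l' (D l l') = 0 := Finset.prod_eq_zero (Finset.mem_univ i) hzero
    have h2 : ∏ l0, ∏ l', σ l' (D l0 l') = 0 := Finset.prod_eq_zero (Finset.mem_univ l) h1
    exact le_of_eq h2
  refine ⟨D, fun i f => ?_⟩
  have hf'R : (fun j => if σ i j = 0 then j else f j) ∈
      Finset.univ.filter (fun f : Fin m → Fin m =>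
        ∀ j ∉ Finset.univ.filter (fun j => σ i j ≠ 0), f j = j) := by
    simp only [Finset.mem_filter, Finset.mem_univ, true_and, not_not]
    intro j hj
    exact if_pos hj
  have hnotbad := hgood i _ hf'R
  have heq : ∑ l, (u i (Function.update (D l) i
        ((fun j => if σ i j = 0 then j else f j) (D l i))) - u i (D l))
      = ∑ l, (u i (Function.update (D l) i (f (D l i))) - u i (D l)) :=
    Finset.sum_congr rfl fun l _ => by simp only [if_neg (hσne l i)]
  rw [heq] at hnotbad
  have hsum := not_lt.mp hnotbad
  rw [div_le_iff₀ (by exact_mod_cast hkpos : (0 : ℝ) < (k : ℝ))]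
  linarith [mul_comm (k : ℝ) ε ▸ hsum]
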